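/- Let p be a prime, k ≥ 1, and let ζ ∈ ℂ be a primitive p^k-th root of unity. Let x ∈ Ẑ[q]^, and write ι₁(x) = Σ_{n≥0} a_n t^n ∈ ℤ[[t]] (a_n ∈ ℤ), where ι₁ : Ẑ[q]^ → ℤ[[t]] is the homomorphism induced by q ↦ 1 + t. Then the series Σ_{n≥0} a_n (ζ − 1)^n converges p-adically in ℤ[ζ] to ev_ζ(x): for every s ≥ 1 there exists N such that for all M ≥ N, ev_ζ(x) − Σ_{n=0}^{M−1} a_n (ζ − 1)^n lies in the ideal p^s ℤ[ζ]. -/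

import Mathlib

open Polynomial

/-- `(q;q)_n = ∏_{i=1}^n (q^i - 1)` in `ℤ[q]`. -/
noncomputable def qPoch (n : ℕ) : Polynomial ℤ :=
  ∏ i ∈ Finset.range n, (X ^ (i + 1) - 1)

lemma qPoch_dvd_succ (n : ℕ) : qPoch n ∣ qPoch (n + 1) :=
  ⟨X ^ (n + 1) - 1, by rw [qPoch, qPoch, Finset.prod_range_succ]⟩

/-- The canonical projection `ℤ[q]/((q;q)_{n+1}) → ℤ[q]/((q;q)_n)`. -/
noncomputable def habiroTrans (n : ℕ) :
    (Polynomial ℤ ⧸ Ideal.span {qPoch (n + 1)}) →+* Polynomial ℤ ⧸ Ideal.span {qPoch n} :=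
  Ideal.Quotient.factor
    (Ideal.span_singleton_le_span_singleton.mpr (qPoch_dvd_succ n))

/-- The Habiro ring `lim_n ℤ[q]/((q;q)_n)`, realized as the subring of compatible
sequences in `∏_n ℤ[q]/((q;q)_n)`. -/
noncomputable def HabiroRing : Subring (∀ n : ℕ, Polynomial ℤ ⧸ Ideal.span {qPoch n}) where
  carrier := {x | ∀ n, habiroTrans n (x (n + 1)) = x n}
  mul_mem' {a b} ha hb n := by
    simp only [Pi.mul_apply, map_mul, ha n, hb n]
  one_mem' n := by simp only [Pi.one_apply, map_one]
  add_mem' {a b} ha hb n := by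
    simp only [Pi.add_apply, map_add, ha n, hb n]
  zero_mem' n := by simp only [Pi.zero_apply, map_zero]
  neg_mem' {a} ha n := by simp only [Pi.neg_apply, map_neg, ha n]

/-- The canonical map `η : ℤ[q] → Ẑ[q]^`. -/
noncomputable def habiroEta : Polynomial ℤ →+* HabiroRing :=
  RingHom.codRestrict (Pi.ringHom fun n => Ideal.Quotient.mk (Ideal.span {qPoch n}))
    HabiroRing (fun _ _ => Ideal.Quotient.factor_mk _ _)

/-- The projection `π_n : Ẑ[q]^ → ℤ[q]/((q;q)_n)`. -/
noncomputable def habiroPi (n : ℕ) : HabiroRing →+* Polynomial ℤ ⧸ Ideal.span {qPoch n} :=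
  (Pi.evalRingHom _ n).comp HabiroRing.subtype

lemma habiroPi_compat (x : HabiroRing) (m d : ℕ) (f : Polynomial ℤ)
    (h : habiroPi (m + d) x = Ideal.Quotient.mk (Ideal.span {qPoch (m + d)}) f) :
    habiroPi m x = Ideal.Quotient.mk (Ideal.span {qPoch m}) f := by
  induction d with
  | zero => exact h
  | succ d ih =>
    apply ih
    have hx := x.2 (m + d)
    have h1 : habiroPi (m + d) x = habiroTrans (m + d) (habiroPi (m + d + 1) x) := hx.symm
    have h2 : habiroPi (m + d + 1) x = Ideal.Quotient.mk (Ideal.span {qPoch (m + d + 1)}) f := h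
    rw [h1, h2]
    exact Ideal.Quotient.factor_mk _ _

lemma eval_mem_closure (ζ : ℂ) (P : Polynomial ℤ) :
    P.eval₂ (Int.castRingHom ℂ) ζ ∈ Subring.closure {ζ} := by
  have hζ : ζ ∈ Subring.closure {ζ} := Subring.subset_closure rfl
  induction P using Polynomial.induction_on' with
  | add p q hp hq => rw [eval₂_add]; exact add_mem hp hq
  | monomial n a =>
    rw [eval₂_monomial]
    have h1 : ((a : ℂ)) ∈ Subring.closure {ζ} := intCast_mem _ _
    have h2 : ζ ^ n ∈ Subring.closure {ζ} := pow_mem hζ n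
    simpa using mul_mem h1 h2

lemma zeta_pow_lemma (p : ℕ) (hp : p.Prime) (k : ℕ) (hk : 1 ≤ k) (ζ : ℂ)
    (hζ : ζ ^ p ^ k = 1) :
    ∃ w ∈ Subring.closure {ζ}, (ζ - 1) ^ p ^ k = (p : ℂ) * w := by
  obtain ⟨G, hG⟩ := exists_add_pow_prime_pow_eq hp (X : Polynomial ℤ) (-1) k
  have hφ := congrArg (Polynomial.eval₂RingHom (Int.castRingHom ℂ) ζ) hG
  simp only [map_pow, map_add, map_mul, map_neg, map_one, map_natCast,
    coe_eval₂RingHom, eval₂_X] at hφ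
  have hGmem : Polynomial.eval₂ (Int.castRingHom ℂ) ζ G ∈ Subring.closure {ζ} :=
    eval_mem_closure ζ G
  have hsub : (ζ + -1) = ζ - 1 := by ring
  rw [hsub, hζ] at hφ
  rcases hp.eq_two_or_odd' with h2 | hodd
  · have heven : Even (p ^ k) := by
      subst h2
      exact (Nat.even_pow).mpr ⟨even_two, by omega⟩
    refine ⟨1 - ζ * Polynomial.eval₂ (Int.castRingHom ℂ) ζ G,
      sub_mem (one_mem _) (mul_mem (Subring.subset_closure rfl) hGmem), ?_⟩
    rw [hφ, heven.neg_one_pow, h2]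
    push_cast
    ring
  · have hoddpk : Odd (p ^ k) := hodd.pow
    refine ⟨-(ζ * Polynomial.eval₂ (Int.castRingHom ℂ) ζ G),
      neg_mem (mul_mem (Subring.subset_closure rfl) hGmem), ?_⟩
    rw [hφ, hoddpk.neg_one_pow]
    ring

lemma eval2_ps_eq (g : Polynomial ℤ) :
    Polynomial.eval₂ (Int.castRingHom (PowerSeries ℤ)) (1 + PowerSeries.X) g
      = ((g.comp (X + 1) : Polynomial ℤ) : PowerSeries ℤ) := by
  have key : (Polynomial.eval₂RingHom (Int.castRingHom (PowerSeries ℤ)) (1 + PowerSeries.X))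
      = (Polynomial.coeToPowerSeries.ringHom).comp
          (Polynomial.eval₂RingHom Polynomial.C (X + 1)) := by
    apply Polynomial.ringHom_ext
    · intro a
      simp [Polynomial.C_eq_intCast, map_intCast]
    · simp only [coe_eval₂RingHom, eval₂_X, RingHom.comp_apply,
        Polynomial.coeToPowerSeries.ringHom_apply, Polynomial.coe_add, Polynomial.coe_one,
        Polynomial.coe_X]
      rw [add_comm]
  have := congrArg (fun φ => φ g) key
  simpa [Polynomial.comp] using this


/-- Let `ζ ∈ ℂ` be a primitive `p^k`-th root of unity (`p` prime,
`k ≥ 1`), let `x ∈ Ẑ[q]^`, and let `a : ℕ → ℤ` be the coefficient sequence of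
`ι₁(x) = Σ a_n t^n` (characterized by: for every `n` and every polynomial representative
`f` of `π_n(x)`, the series `Σ a_i t^i` agrees with `f(1+t)` modulo `t^n`).  Then
`Σ a_n (ζ-1)^n` converges `p`-adically in `ℤ[ζ]` to `ev_ζ(x)`: for every `s ≥ 1` there is
`N` such that for all `M ≥ N` the difference `ev_ζ(x) − Σ_{n<M} a_n (ζ-1)^n` lies in
`p^s ℤ[ζ]`. -/
theorem habiro_padic_convergence_at_prime_power_root
    (p : ℕ) (hp : p.Prime) (k : ℕ) (hk : 1 ≤ k) (ζ : ℂ) (hζ : IsPrimitiveRoot ζ (p ^ k))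
    (x : HabiroRing) (a : ℕ → ℤ)
    (ha : ∀ (n : ℕ) (f : Polynomial ℤ),
      habiroPi n x = Ideal.Quotient.mk (Ideal.span {qPoch n}) f →
      (PowerSeries.mk fun i => a i) -
        Polynomial.eval₂ (Int.castRingHom (PowerSeries ℤ)) (1 + PowerSeries.X) f ∈
          Ideal.span {(PowerSeries.X : PowerSeries ℤ) ^ n})
    (f : Polynomial ℤ)
    (hf : habiroPi (p ^ k) x = Ideal.Quotient.mk (Ideal.span {qPoch (p ^ k)}) f)
    (s : ℕ) (hs : 1 ≤ s) :
    ∃ N : ℕ, ∀ M : ℕ, N ≤ M →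
      ∃ y ∈ Subring.closure {ζ},
        Polynomial.eval₂ (Int.castRingHom ℂ) ζ f -
          ∑ n ∈ Finset.range M, (a n : ℂ) * (ζ - 1) ^ n = (p : ℂ) ^ s * y := by
  classical
  have hζc : ζ ∈ Subring.closure {ζ} := Subring.subset_closure rfl
  have hζ1 : ζ - 1 ∈ Subring.closure {ζ} := sub_mem hζc (one_mem _)
  have hroot : ζ ^ p ^ k = 1 := hζ.pow_eq_one
  obtain ⟨w, hw, hwpow⟩ := zeta_pow_lemma p hp k hk ζ hroot
  refine ⟨s * p ^ k, fun M hM => ?_⟩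
  obtain ⟨g, hg⟩ := Ideal.Quotient.mk_surjective (habiroPi M x)
  have hgM : habiroPi M x = Ideal.Quotient.mk (Ideal.span {qPoch M}) g := hg.symm
  have hD := ha M g hgM
  set h : Polynomial ℤ := g.comp (X + 1) with hh
  rw [eval2_ps_eq g, Ideal.mem_span_singleton] at hD
  have hcoeff : ∀ i < M, a i = h.coeff i := by
    intro i hi
    have h0 := (PowerSeries.X_pow_dvd_iff.mp hD) i hi
    simp only [map_sub, PowerSeries.coeff_mk, Polynomial.coeff_coe, sub_eq_zero] at h0
    exact h0
  have hpk1 : 1 ≤ p ^ k := Nat.one_le_pow _ _ hp.pos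
  have hspk : p ^ k ≤ s * p ^ k := Nat.le_mul_of_pos_left _ hs
  have hpkM : p ^ k ≤ M := le_trans hspk hM
  -- f(ζ) = g(ζ)
  have hfg : habiroPi (p ^ k) x = Ideal.Quotient.mk (Ideal.span {qPoch (p ^ k)}) g := by
    have := habiroPi_compat x (p ^ k) (M - p ^ k) g
      (by rwa [Nat.add_sub_cancel' hpkM])
    exact this
  have hdvd : qPoch (p ^ k) ∣ f - g := by
    rw [hf] at hfg
    exact Ideal.mem_span_singleton.mp (Ideal.Quotient.eq.mp hfg)
  obtain ⟨u, hu⟩ := hdvd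
  have hq0 : Polynomial.eval₂ (Int.castRingHom ℂ) ζ (qPoch (p ^ k)) = 0 := by
    have := congrArg (fun q => Polynomial.eval₂RingHom (Int.castRingHom ℂ) ζ q)
      (rfl : qPoch (p ^ k) = qPoch (p ^ k))
    rw [show Polynomial.eval₂ (Int.castRingHom ℂ) ζ (qPoch (p ^ k))
        = Polynomial.eval₂RingHom (Int.castRingHom ℂ) ζ (qPoch (p ^ k)) from rfl, qPoch,
      map_prod]
    refine Finset.prod_eq_zero (i := p ^ k - 1) (Finset.mem_range.mpr (by omega)) ?_
    simp only [map_sub, map_pow, map_one, coe_eval₂RingHom, eval₂_X]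
    rw [Nat.sub_add_cancel hpk1, hroot, sub_self]
  have hfgζ : Polynomial.eval₂ (Int.castRingHom ℂ) ζ f
      = Polynomial.eval₂ (Int.castRingHom ℂ) ζ g := by
    have := congrArg (Polynomial.eval₂RingHom (Int.castRingHom ℂ) ζ)
      (show f = g + qPoch (p ^ k) * u by linear_combination hu)
    simpa [hq0] using this
  -- g(ζ) = h(ζ-1)
  have hgh : Polynomial.eval₂ (Int.castRingHom ℂ) ζ g
      = Polynomial.eval₂ (Int.castRingHom ℂ) (ζ - 1) h := by
    rw [hh, Polynomial.eval₂_comp]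
    simp
  set D := max M (h.natDegree + 1) with hDdef
  have hMD : M ≤ D := le_max_left _ _
  have hhd : h.natDegree < D := lt_of_lt_of_le (Nat.lt_succ_self _) (le_max_right _ _)
  have hsum : Polynomial.eval₂ (Int.castRingHom ℂ) (ζ - 1) h
      = ∑ n ∈ Finset.range D, (h.coeff n : ℂ) * (ζ - 1) ^ n := by
    rw [Polynomial.eval₂_eq_sum_range' (Int.castRingHom ℂ) hhd]
    simp
  have hIco : Polynomial.eval₂ (Int.castRingHom ℂ) ζ f -
      ∑ n ∈ Finset.range M, (a n : ℂ) * (ζ - 1) ^ n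
      = ∑ n ∈ Finset.Ico M D, (h.coeff n : ℂ) * (ζ - 1) ^ n := by
    rw [Finset.sum_Ico_eq_sub _ hMD, hfgζ, hgh, hsum]
    congr 1
    refine Finset.sum_congr rfl fun n hn => ?_
    rw [hcoeff n (Finset.mem_range.mp hn)]
  refine ⟨∑ n ∈ Finset.Ico M D, (h.coeff n : ℂ) * (w ^ s * (ζ - 1) ^ (n - s * p ^ k)), ?_, ?_⟩
  · refine Subring.sum_mem _ fun n _ => ?_
    have h1 : ((h.coeff n : ℂ)) ∈ Subring.closure {ζ} := intCast_mem _ _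
    have h2 : w ^ s ∈ Subring.closure {ζ} := pow_mem hw s
    have h3 : (ζ - 1) ^ (n - s * p ^ k) ∈ Subring.closure {ζ} := pow_mem hζ1 _
    exact mul_mem h1 (mul_mem h2 h3)
  · rw [hIco, Finset.mul_sum]
    refine Finset.sum_congr rfl fun n hn => ?_
    have hn' : s * p ^ k ≤ n := le_trans hM (Finset.mem_Ico.mp hn).1
    have : (ζ - 1) ^ n = ((p : ℂ) * w) ^ s * (ζ - 1) ^ (n - s * p ^ k) := by
      rw [← hwpow, ← pow_mul, ← pow_add, mul_comm (p ^ k) s, Nat.add_sub_cancel' hn']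
    rw [this]
    ring
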